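/- Let k ≥ 1 and let Ω be a real symmetric positive definite (k+1)×(k+1) matrix. If (M̄, Ȳ_0, …, Ȳ_k) and (M̃, Ỹ_0, …, Ỹ_k) are two KKT pairs for (P) at Ω, then M̄ = M̃ and Ȳ_i = Ỹ_i for every i = 0,…,k. (Uniqueness of the primal and dual solutions of (P), established in part (ii) of the proof of Lemma 3 in the paper.) -/

import Mathlib

open Matrix MeasureTheory

/-- The constraint matrices `C_0 = 0` and
`C_i = [[0, e_i/2], [e_iᵀ/2, -ylow]]` for `i = 1,…,k` of the primal SDP (P). -/
noncomputable def Cmat (k : ℕ) (ylow : ℝ) : Fin (k + 1) → Matrix (Fin (k + 1)) (Fin (k + 1)) ℝ :=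
  Fin.cases 0 fun i : Fin k =>
    Matrix.of fun a b =>
      if a = Fin.last k ∧ b = Fin.last k then -ylow
      else if a = i.castSucc ∧ b = Fin.last k then 1 / 2
      else if a = Fin.last k ∧ b = i.castSucc then 1 / 2
      else 0

/-- A symmetric matrix `M` is feasible for (P) if `M - C_i ⪯ 0` for `i = 0,…,k`. -/
def PFeasible (k : ℕ) (ylow : ℝ) (M : Matrix (Fin (k + 1)) (Fin (k + 1)) ℝ) : Prop :=
  M.IsSymm ∧ ∀ i : Fin (k + 1), (Cmat k ylow i - M).PosSemidef


/-- A KKT pair for (P) at `Ω`: a feasible `M̄` together with positive semidefinite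
multipliers `Ȳ_0, …, Ȳ_k` with `∑ Ȳ_i = Ω` and `Ȳ_i (M̄ - C_i) = 0` for all `i`. -/
def KKTpair (k : ℕ) (ylow : ℝ) (Ω M : Matrix (Fin (k + 1)) (Fin (k + 1)) ℝ)
    (Y : Fin (k + 1) → Matrix (Fin (k + 1)) (Fin (k + 1)) ℝ) : Prop :=
  PFeasible k ylow M ∧ (∀ i, (Y i).PosSemidef) ∧ (∑ i, Y i) = Ω ∧
    ∀ i, Y i * (M - Cmat k ylow i) = 0

section Aux

variable {n : Type*} [Fintype n] [DecidableEq n]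

omit [DecidableEq n] in
lemma trace_tmul_nonneg' (P : Matrix n n ℝ) : 0 ≤ (Pᵀ * P).trace := by
  rw [Matrix.trace]
  refine Finset.sum_nonneg fun j _ => ?_
  simp only [Matrix.diag_apply, Matrix.mul_apply, Matrix.transpose_apply]
  exact Finset.sum_nonneg fun i _ => mul_self_nonneg _

omit [DecidableEq n] in
lemma eq_zero_of_trace_tmul' (P : Matrix n n ℝ) (h : (Pᵀ * P).trace = 0) : P = 0 := by
  rw [Matrix.trace] at h
  have h1 : ∀ j ∈ Finset.univ, (0:ℝ) ≤ (Pᵀ * P).diag j := fun j _ => by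
    simp only [Matrix.diag_apply, Matrix.mul_apply, Matrix.transpose_apply]
    exact Finset.sum_nonneg fun i _ => mul_self_nonneg _
  have h2 := (Finset.sum_eq_zero_iff_of_nonneg h1).mp h
  ext i j
  have h3 := h2 j (Finset.mem_univ j)
  simp only [Matrix.diag_apply, Matrix.mul_apply, Matrix.transpose_apply] at h3
  have h4 := (Finset.sum_eq_zero_iff_of_nonneg (fun i _ => mul_self_nonneg (P i j))).mp h3
  have := h4 i (Finset.mem_univ i)
  simpa [mul_self_eq_zero] using this

open scoped MatrixOrder in
lemma psd_mul_psd_trace' {A B : Matrix n n ℝ} (hA : A.PosSemidef) (hB : B.PosSemidef) :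
    0 ≤ (A * B).trace ∧ ((A * B).trace = 0 → A * B = 0) := by
  set S := CFC.sqrt A with hS
  set T := CFC.sqrt B with hT
  have hSt : Sᵀ = S := by
    have : S.IsHermitian := (CFC.sqrt_nonneg A).posSemidef.1
    simpa [Matrix.IsHermitian, Matrix.conjTranspose_eq_transpose_of_trivial] using this
  have hTt : Tᵀ = T := by
    have : T.IsHermitian := (CFC.sqrt_nonneg B).posSemidef.1
    simpa [Matrix.IsHermitian, Matrix.conjTranspose_eq_transpose_of_trivial] using this
  have hP : (T * S)ᵀ = S * T := by rw [Matrix.transpose_mul, hSt, hTt]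
  have hAB : A * B = S * (S * (T * T)) := by
    rw [← CFC.sqrt_mul_sqrt_self A hA.nonneg, ← CFC.sqrt_mul_sqrt_self B hB.nonneg, ← hS, ← hT, Matrix.mul_assoc]
  have htr : (A * B).trace = ((T * S)ᵀ * (T * S)).trace := by
    rw [hAB, Matrix.trace_mul_comm, hP]
    congr 1
    rw [Matrix.mul_assoc S T (T*S), ← Matrix.mul_assoc T T S, Matrix.mul_assoc]
  constructor
  · rw [htr]; exact trace_tmul_nonneg' _
  · intro h
    rw [htr] at h
    have h0 : T * S = 0 := eq_zero_of_trace_tmul' _ h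
    have h1 : S * T = 0 := by rw [← hP, h0, Matrix.transpose_zero]
    rw [hAB, ← Matrix.mul_assoc S T T, h1]
    simp

omit [Fintype n] [DecidableEq n] in
lemma transpose_eq_of_isHermitian' {A : Matrix n n ℝ} (h : A.IsHermitian) : Aᵀ = A := by
  ext a b
  have := congrFun (congrFun h a) b
  simpa [Matrix.conjTranspose_apply] using this

end Aux

lemma Cmat_zero' (k : ℕ) (ylow : ℝ) : Cmat k ylow 0 = 0 := by
  simp [Cmat]

lemma Cmat_succ_apply' (k : ℕ) (ylow : ℝ) (i : Fin k) (a b : Fin (k + 1)) :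
    Cmat k ylow i.succ a b =
      if a = Fin.last k ∧ b = Fin.last k then -ylow
      else if a = i.castSucc ∧ b = Fin.last k then 1 / 2
      else if a = Fin.last k ∧ b = i.castSucc then 1 / 2
      else 0 := by
  simp [Cmat]

/-- Quadratic form of any `C_j` vanishes on vectors whose last coordinate is zero. -/
lemma Cmat_qform_zero' (k : ℕ) (ylow : ℝ) (j : Fin (k + 1)) (x : Fin (k + 1) → ℝ)
    (hlast : x (Fin.last k) = 0) : x ⬝ᵥ (Cmat k ylow j) *ᵥ x = 0 := by
  refine Fin.cases ?_ (fun a => ?_) j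
  · simp [Cmat_zero']
  · simp only [dotProduct, Matrix.mulVec]
    refine Finset.sum_eq_zero fun b _ => ?_
    rcases eq_or_ne b (Fin.last k) with hb | hb
    · simp [hb, hlast]
    · refine mul_eq_zero_of_right _ (Finset.sum_eq_zero fun c _ => ?_)
      rcases eq_or_ne c (Fin.last k) with hc | hc
      · simp [hc, hlast]
      · rw [Cmat_succ_apply']
        simp [hb, hc]

/-- Key kernel lemma: a kernel vector of `C_i - M` with vanishing last coordinate is zero. -/
lemma ker_eq_zero_of_last' (k : ℕ) (ylow : ℝ) (M : Matrix (Fin (k + 1)) (Fin (k + 1)) ℝ)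
    (hfeas : ∀ i, (Cmat k ylow i - M).PosSemidef) {i : Fin (k + 1)} {x : Fin (k + 1) → ℝ}
    (hx : (Cmat k ylow i - M) *ᵥ x = 0) (hlast : x (Fin.last k) = 0) : x = 0 := by
  have hMq : x ⬝ᵥ M *ᵥ x = 0 := by
    have h1 : x ⬝ᵥ (Cmat k ylow i - M) *ᵥ x = 0 := by rw [hx, dotProduct_zero]
    rw [Matrix.sub_mulVec, dotProduct_sub, Cmat_qform_zero' k ylow i x hlast] at h1
    linarith
  have hker : ∀ j, (Cmat k ylow j - M) *ᵥ x = 0 := fun j => by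
    refine ((hfeas j).dotProduct_mulVec_zero_iff x).mp ?_
    have : star x = x := funext fun a => rfl
    rw [this, Matrix.sub_mulVec, dotProduct_sub, Cmat_qform_zero' k ylow j x hlast, hMq,
      sub_zero]
  have hM0 : M *ᵥ x = 0 := by
    have h0 := hker 0
    rw [Cmat_zero', zero_sub, Matrix.neg_mulVec, neg_eq_zero] at h0
    exact h0
  have hC : ∀ a : Fin k, (Cmat k ylow a.succ) *ᵥ x = 0 := fun a => by
    have h1 := hker a.succ
    rwa [Matrix.sub_mulVec, hM0, sub_zero] at h1
  funext b
  refine Fin.lastCases hlast (fun a => ?_) b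
  have h2 := congrFun (hC a) (Fin.last k)
  simp only [Matrix.mulVec, dotProduct, Pi.zero_apply] at h2
  rw [Fin.sum_univ_castSucc] at h2
  have h3 : ∀ b' : Fin k, Cmat k ylow a.succ (Fin.last k) b'.castSucc * x b'.castSucc
      = if b' = a then (1/2) * x b'.castSucc else 0 := fun b' => by
    rw [Cmat_succ_apply']
    rcases eq_or_ne b' a with h | h
    · simp [h, (Fin.castSucc_lt_last a).ne, (Fin.castSucc_lt_last a).ne']
    · simp [h, (Fin.castSucc_lt_last b').ne, (Fin.castSucc_lt_last a).ne',
        fun hc : b'.castSucc = a.castSucc => h (Fin.castSucc_injective k hc)]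
  rw [Finset.sum_congr rfl (fun b' _ => h3 b'), Finset.sum_ite_eq' Finset.univ a
    (fun b' => (1/2 : ℝ) * x b'.castSucc)] at h2
  simp only [Finset.mem_univ, if_true, hlast, mul_zero, add_zero] at h2
  have : x a.castSucc = 0 := by linarith
  simpa using this

/-- Two kernel vectors of `C_i - M` are proportional. -/
lemma ker_prop' (k : ℕ) (ylow : ℝ) (M : Matrix (Fin (k + 1)) (Fin (k + 1)) ℝ)
    (hfeas : ∀ i, (Cmat k ylow i - M).PosSemidef) {i : Fin (k + 1)} {x y : Fin (k + 1) → ℝ}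
    (hx : (Cmat k ylow i - M) *ᵥ x = 0) (hy : (Cmat k ylow i - M) *ᵥ y = 0) :
    y (Fin.last k) • x = x (Fin.last k) • y := by
  have h := ker_eq_zero_of_last' k ylow M hfeas (i := i)
    (x := y (Fin.last k) • x - x (Fin.last k) • y) ?_ ?_
  · rwa [sub_eq_zero] at h
  · rw [Matrix.mulVec_sub, Matrix.mulVec_smul, Matrix.mulVec_smul, hx, hy, smul_zero, smul_zero,
      sub_zero]
  · simp [mul_comm]

/-- Structure of a symmetric matrix annihilated by `C_i - M`. -/
lemma Y_struct' (k : ℕ) (ylow : ℝ) (M : Matrix (Fin (k + 1)) (Fin (k + 1)) ℝ)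
    (hfeas : ∀ i, (Cmat k ylow i - M).PosSemidef) (i : Fin (k + 1))
    (Y : Matrix (Fin (k + 1)) (Fin (k + 1)) ℝ) (hYs : Yᵀ = Y)
    (hY0 : (Cmat k ylow i - M) * Y = 0) (v : Fin (k + 1) → ℝ)
    (hv : (Cmat k ylow i - M) *ᵥ v = 0) (hvl : v (Fin.last k) = 1) :
    Y = Y (Fin.last k) (Fin.last k) • Matrix.vecMulVec v v := by
  have hcol : ∀ b, (Cmat k ylow i - M) *ᵥ (fun a => Y a b) = 0 := fun b => by
    funext a
    have h := congrFun (congrFun hY0 a) b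
    simpa [Matrix.mul_apply, Matrix.mulVec, dotProduct] using h
  have hrel : ∀ b a, Y a b = Y (Fin.last k) b * v a := fun b a => by
    have h := ker_prop' k ylow M hfeas (i := i) (hcol b) hv
    have h2 := congrFun h a
    simpa [hvl] using h2
  ext a b
  have h1 := hrel b a
  have hsym : Y (Fin.last k) b = Y b (Fin.last k) := by
    have := congrFun (congrFun hYs b) (Fin.last k)
    simpa [Matrix.transpose_apply] using this
  have h2 : Y (Fin.last k) b = Y (Fin.last k) (Fin.last k) * v b := by
    rw [hsym]
    exact hrel (Fin.last k) b
  rw [h1, h2]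
  simp [Matrix.vecMulVec_apply]
  ring

/-- **Uniqueness of the primal and dual solutions of (P)** (part (ii) of the proof of
Lemma 3 of the paper): two KKT pairs for (P) at a positive definite `Ω` coincide. -/
theorem KKTpair_unique (k : ℕ) (hk : 1 ≤ k) (ylow : ℝ)
    (Ω : Matrix (Fin (k + 1)) (Fin (k + 1)) ℝ) (hΩ : Ω.PosDef)
    (M₁ M₂ : Matrix (Fin (k + 1)) (Fin (k + 1)) ℝ)
    (Y₁ Y₂ : Fin (k + 1) → Matrix (Fin (k + 1)) (Fin (k + 1)) ℝ)
    (h₁ : KKTpair k ylow Ω M₁ Y₁) (h₂ : KKTpair k ylow Ω M₂ Y₂) :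
    M₁ = M₂ ∧ ∀ i, Y₁ i = Y₂ i := by
  obtain ⟨⟨hM1s, hfeas1⟩, hY1psd, hY1sum, hY1c⟩ := h₁
  obtain ⟨⟨hM2s, hfeas2⟩, hY2psd, hY2sum, hY2c⟩ := h₂
  -- rewrite complementarity
  have hc1 : ∀ i, Y₁ i * (Cmat k ylow i - M₁) = 0 := fun i => by
    have h : Y₁ i * (Cmat k ylow i - M₁) = -(Y₁ i * (M₁ - Cmat k ylow i)) := by
      rw [← Matrix.mul_neg, neg_sub]
    rw [h, hY1c i, neg_zero]
  have hc2 : ∀ i, Y₂ i * (Cmat k ylow i - M₂) = 0 := fun i => by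
    have h : Y₂ i * (Cmat k ylow i - M₂) = -(Y₂ i * (M₂ - Cmat k ylow i)) := by
      rw [← Matrix.mul_neg, neg_sub]
    rw [h, hY2c i, neg_zero]
  have f_eq : ∀ i, Y₁ i * (Cmat k ylow i - M₂) = Y₁ i * (M₁ - M₂) := fun i => by
    have h := hc1 i
    rw [Matrix.mul_sub, sub_eq_zero] at h
    rw [Matrix.mul_sub, Matrix.mul_sub, h]
  have g_eq : ∀ i, Y₂ i * (Cmat k ylow i - M₁) = Y₂ i * (M₂ - M₁) := fun i => by
    have h := hc2 i
    rw [Matrix.mul_sub, sub_eq_zero] at h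
    rw [Matrix.mul_sub, Matrix.mul_sub, h]
  have sum_f : ∑ i, (Y₁ i * (Cmat k ylow i - M₂)).trace = (Ω * (M₁ - M₂)).trace := by
    simp_rw [f_eq]
    rw [← Matrix.trace_sum, ← Finset.sum_mul, hY1sum]
  have sum_g : ∑ i, (Y₂ i * (Cmat k ylow i - M₁)).trace = (Ω * (M₂ - M₁)).trace := by
    simp_rw [g_eq]
    rw [← Matrix.trace_sum, ← Finset.sum_mul, hY2sum]
  have hfg : (Ω * (M₁ - M₂)).trace + (Ω * (M₂ - M₁)).trace = 0 := by
    rw [← Matrix.trace_add, ← Matrix.mul_add]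
    have : M₁ - M₂ + (M₂ - M₁) = 0 := by abel
    rw [this, Matrix.mul_zero, Matrix.trace_zero]
  have f_nonneg : ∀ i ∈ Finset.univ, (0:ℝ) ≤ (Y₁ i * (Cmat k ylow i - M₂)).trace := fun i _ =>
    (psd_mul_psd_trace' (hY1psd i) (hfeas2 i)).1
  have g_nonneg : ∀ i ∈ Finset.univ, (0:ℝ) ≤ (Y₂ i * (Cmat k ylow i - M₁)).trace := fun i _ =>
    (psd_mul_psd_trace' (hY2psd i) (hfeas1 i)).1
  have sum_f_zero : ∑ i, (Y₁ i * (Cmat k ylow i - M₂)).trace = 0 := by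
    have h1 : 0 ≤ ∑ i, (Y₁ i * (Cmat k ylow i - M₂)).trace := Finset.sum_nonneg f_nonneg
    have h2 : 0 ≤ ∑ i, (Y₂ i * (Cmat k ylow i - M₁)).trace := Finset.sum_nonneg g_nonneg
    rw [sum_f] at h1 ⊢
    rw [sum_g] at h2
    linarith
  have f_zero : ∀ i, (Y₁ i * (Cmat k ylow i - M₂)).trace = 0 := fun i =>
    (Finset.sum_eq_zero_iff_of_nonneg f_nonneg).mp sum_f_zero i (Finset.mem_univ i)
  have cross : ∀ i, Y₁ i * (Cmat k ylow i - M₂) = 0 := fun i =>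
    (psd_mul_psd_trace' (hY1psd i) (hfeas2 i)).2 (f_zero i)
  -- M₁ = M₂
  have hΩdet : IsUnit Ω.det := hΩ.det_pos.ne'.isUnit
  have hMM : Ω * (M₁ - M₂) = 0 := by
    rw [← hY1sum, Finset.sum_mul]
    refine Finset.sum_eq_zero fun i _ => ?_
    rw [← f_eq i, cross i]
  have hM12 : M₁ = M₂ := by
    have h := congrArg (fun X => Ω⁻¹ * X) hMM
    simp only [Matrix.mul_zero] at h
    rw [← Matrix.mul_assoc, Matrix.nonsing_inv_mul _ hΩdet, Matrix.one_mul] at h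
    rwa [sub_eq_zero] at h
  subst hM12
  refine ⟨rfl, ?_⟩
  -- structure of the multipliers
  have hYs1 : ∀ i, (Y₁ i)ᵀ = Y₁ i := fun i => transpose_eq_of_isHermitian' (hY1psd i).1
  have hYs2 : ∀ i, (Y₂ i)ᵀ = Y₂ i := fun i => transpose_eq_of_isHermitian' (hY2psd i).1
  have hCM : ∀ i, (Cmat k ylow i - M₁)ᵀ = Cmat k ylow i - M₁ := fun i =>
    transpose_eq_of_isHermitian' (hfeas1 i).1
  have hleft1 : ∀ i, (Cmat k ylow i - M₁) * Y₁ i = 0 := fun i => by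
    have h := congrArg Matrix.transpose (hc1 i)
    rwa [Matrix.transpose_mul, hYs1 i, hCM i, Matrix.transpose_zero] at h
  have hleft2 : ∀ i, (Cmat k ylow i - M₁) * Y₂ i = 0 := fun i => by
    have h := congrArg Matrix.transpose (hc2 i)
    rwa [Matrix.transpose_mul, hYs2 i, hCM i, Matrix.transpose_zero] at h
  have key : ∀ i, ∃ w : Fin (k+1) → ℝ,
      Y₁ i = Y₁ i (Fin.last k) (Fin.last k) • Matrix.vecMulVec w w ∧
      Y₂ i = Y₂ i (Fin.last k) (Fin.last k) • Matrix.vecMulVec w w := by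
    intro i
    by_cases hKi : ∃ w, (Cmat k ylow i - M₁) *ᵥ w = 0 ∧ w (Fin.last k) = 1
    · obtain ⟨w, hw, hwl⟩ := hKi
      exact ⟨w, Y_struct' k ylow M₁ hfeas1 i _ (hYs1 i) (hleft1 i) w hw hwl,
        Y_struct' k ylow M₁ hfeas1 i _ (hYs2 i) (hleft2 i) w hw hwl⟩
    · have hker0 : ∀ x, (Cmat k ylow i - M₁) *ᵥ x = 0 → x = 0 := fun x hx => by
        by_cases hl : x (Fin.last k) = 0
        · exact ker_eq_zero_of_last' k ylow M₁ hfeas1 hx hl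
        · exact absurd ⟨(x (Fin.last k))⁻¹ • x,
            by rw [Matrix.mulVec_smul, hx, smul_zero],
            by simp [inv_mul_cancel₀ hl]⟩ hKi
      have hz : ∀ Y : Matrix (Fin (k+1)) (Fin (k+1)) ℝ,
          (Cmat k ylow i - M₁) * Y = 0 → Y = 0 := fun Y hY => by
        ext a b
        have hcol : (Cmat k ylow i - M₁) *ᵥ (fun a => Y a b) = 0 := by
          funext a'
          have h := congrFun (congrFun hY a') b
          simpa [Matrix.mul_apply, Matrix.mulVec, dotProduct] using h
        have := congrFun (hker0 _ hcol) a
        simpa using this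
      refine ⟨fun _ => 0, ?_, ?_⟩
      · rw [hz _ (hleft1 i)]; simp
      · rw [hz _ (hleft2 i)]; simp
  choose w hw1 hw2 using key
  set V : Matrix (Fin (k+1)) (Fin (k+1)) ℝ := Matrix.of fun a i => w i a with hV
  have hdecomp : ∀ c : Fin (k+1) → ℝ,
      (∑ i, c i • Matrix.vecMulVec (w i) (w i)) = V * Matrix.diagonal c * Vᵀ := by
    intro c
    ext a b
    rw [Matrix.mul_apply]
    simp only [Matrix.sum_apply, Matrix.smul_apply, Matrix.vecMulVec_apply, smul_eq_mul,
      Matrix.mul_diagonal, Matrix.transpose_apply, Matrix.of_apply, hV]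
    exact Finset.sum_congr rfl fun j _ => by ring
  have hcmp1 : V * Matrix.diagonal (fun i => Y₁ i (Fin.last k) (Fin.last k)) * Vᵀ = Ω := by
    rw [← hdecomp, ← hY1sum]
    exact Finset.sum_congr rfl fun i _ => (hw1 i).symm
  have hcmp2 : V * Matrix.diagonal (fun i => Y₂ i (Fin.last k) (Fin.last k)) * Vᵀ = Ω := by
    rw [← hdecomp, ← hY2sum]
    exact Finset.sum_congr rfl fun i _ => (hw2 i).symm
  have hVdet : IsUnit V.det := by
    have h := congrArg Matrix.det hcmp1
    rw [Matrix.det_mul, Matrix.det_mul, Matrix.det_transpose] at h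
    refine isUnit_iff_ne_zero.mpr fun h0 => ?_
    rw [h0] at h
    simp only [zero_mul, mul_zero] at h
    exact hΩ.det_pos.ne' h.symm
  have hVTdet : IsUnit (Vᵀ).det := by rwa [Matrix.det_transpose]
  have hcan : ∀ D : Matrix (Fin (k+1)) (Fin (k+1)) ℝ, V⁻¹ * (V * D * Vᵀ) * (Vᵀ)⁻¹ = D :=
    fun D => by
      rw [Matrix.mul_assoc V D Vᵀ, ← Matrix.mul_assoc V⁻¹ V (D * Vᵀ),
        Matrix.nonsing_inv_mul _ hVdet, Matrix.one_mul, Matrix.mul_assoc,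
        Matrix.mul_nonsing_inv _ hVTdet, Matrix.mul_one]
  have hdiag : Matrix.diagonal (fun i => Y₁ i (Fin.last k) (Fin.last k)) =
      Matrix.diagonal (fun i => Y₂ i (Fin.last k) (Fin.last k)) := by
    rw [← hcan (Matrix.diagonal (fun i => Y₁ i (Fin.last k) (Fin.last k))),
      ← hcan (Matrix.diagonal (fun i => Y₂ i (Fin.last k) (Fin.last k))), hcmp1, hcmp2]
  intro i
  have hci := congrFun (congrFun hdiag i) i
  simp only [Matrix.diagonal_apply_eq] at hci
  rw [hw1 i, hw2 i, hci]
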